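/- In a single iteration of RandColStep, a vertex u with current palette C_u of size at least d(u)+1 (where d(u) is its number of currently uncolored neighbors) gets permanently colored with probability at least 1/4. -/

import Mathlib

lemma chord' {x : ℝ} (h0 : 0 ≤ x) (h1 : x ≤ 1/2) :
    Real.exp (-(Real.log 4 * x)) ≤ 1 - x := by
  have h := convexOn_exp.2 (Set.mem_univ (0:ℝ)) (Set.mem_univ (-Real.log 2))
      (by linarith : (0:ℝ) ≤ 1 - 2*x) (by linarith : (0:ℝ) ≤ 2*x) (by ring)
  have hlog : Real.log 4 = 2 * Real.log 2 := by
    rw [show (4:ℝ) = 2^2 by norm_num, Real.log_pow]; push_cast; ring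
  have he : Real.exp (-Real.log 2) = 1/2 := by
    rw [Real.exp_neg, Real.exp_log (by norm_num : (0:ℝ) < 2)]; norm_num
  simp only [smul_eq_mul, mul_zero, zero_add, Real.exp_zero, mul_one, he] at h
  have harg : 2 * x * -Real.log 2 = -(Real.log 4 * x) := by rw [hlog]; ring
  rw [harg] at h
  linarith

lemma tangent' (a b : ℝ) : Real.exp a * (1 + b - a) ≤ Real.exp b := by
  have h := Real.add_one_le_exp (b - a)
  have := Real.exp_pos a
  calc Real.exp a * (1 + b - a) = Real.exp a * (b - a + 1) := by ring
    _ ≤ Real.exp a * Real.exp (b - a) := by nlinarith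
    _ = Real.exp b := by rw [← Real.exp_add]; ring_nf

open Finset in
lemma key' {α β : Type*} (Cu : Finset α) (N : Finset β)
    (x : β → α → ℝ) (hx0 : ∀ v ∈ N, ∀ c ∈ Cu, 0 ≤ x v c)
    (hx2 : ∀ v ∈ N, ∀ c ∈ Cu, x v c ≤ 1/2)
    (hsum : ∑ c ∈ Cu, ∑ v ∈ N, x v c ≤ (Cu.card : ℝ) - 1)
    (hne : Cu.Nonempty) :
    (1/4 : ℝ) * Cu.card ≤ ∑ c ∈ Cu, ∏ v ∈ N, (1 - x v c) := by
  set L := Real.log 4 with hL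
  have hL0 : 0 ≤ L := Real.log_nonneg (by norm_num)
  have hn1 : (1:ℝ) ≤ Cu.card := by
    have := Finset.card_pos.mpr hne
    exact_mod_cast this
  set n : ℝ := (Cu.card : ℝ) with hn
  set m : ℝ := (n - 1)/n with hm
  have hnpos : 0 < n := by linarith
  have hm1 : m ≤ 1 := by rw [hm]; rw [div_le_one hnpos]; linarith
  have hm0 : 0 ≤ m := by rw [hm]; apply div_nonneg <;> linarith
  -- step 1 : per-color bound
  have h1 : ∀ c ∈ Cu, Real.exp (-(L * ∑ v ∈ N, x v c)) ≤ ∏ v ∈ N, (1 - x v c) := by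
    intro c hc
    have : -(L * ∑ v ∈ N, x v c) = ∑ v ∈ N, -(L * x v c) := by
      rw [Finset.mul_sum, ← Finset.sum_neg_distrib]
    rw [this, Real.exp_sum]
    exact Finset.prod_le_prod (fun v _ => (Real.exp_pos _).le)
      (fun v hv => chord' (hx0 v hv c hc) (hx2 v hv c hc))
  -- step 2 : tangent line
  have h2 : ∀ c ∈ Cu, Real.exp (-(L*m)) * (1 + (-(L * ∑ v ∈ N, x v c)) - (-(L*m)))
      ≤ Real.exp (-(L * ∑ v ∈ N, x v c)) := fun c _ => tangent' _ _
  have h3 : n * Real.exp (-(L*m)) ≤ ∑ c ∈ Cu, ∏ v ∈ N, (1 - x v c) := by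
    have hs : ∑ c ∈ Cu, Real.exp (-(L*m)) * (1 + (-(L * ∑ v ∈ N, x v c)) - (-(L*m)))
        ≤ ∑ c ∈ Cu, ∏ v ∈ N, (1 - x v c) :=
      Finset.sum_le_sum (fun c hc => le_trans (h2 c hc) (h1 c hc))
    have hexpand : ∑ c ∈ Cu, Real.exp (-(L*m)) * (1 + (-(L * ∑ v ∈ N, x v c)) - (-(L*m)))
        = Real.exp (-(L*m)) * (n * (1 + L*m) - L * ∑ c ∈ Cu, ∑ v ∈ N, x v c) := by
      rw [← Finset.mul_sum]
      congr 1
      rw [Finset.sum_sub_distrib, Finset.sum_add_distrib, Finset.sum_const,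
        Finset.sum_const, Finset.sum_neg_distrib, ← Finset.mul_sum]
      simp only [nsmul_eq_mul, mul_one]
      rw [← hn]
      ring
    rw [hexpand] at hs
    refine le_trans ?_ hs
    have hnm : n * m = n - 1 := by rw [hm]; field_simp
    have hE := (Real.exp_pos (-(L*m))).le
    have : n ≤ n * (1 + L*m) - L * ∑ c ∈ Cu, ∑ v ∈ N, x v c := by
      have : L * (∑ c ∈ Cu, ∑ v ∈ N, x v c) ≤ L * (n - 1) :=
        mul_le_mul_of_nonneg_left hsum hL0
      nlinarith
    nlinarith
  refine le_trans ?_ h3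
  have h4 : (1/4 : ℝ) ≤ Real.exp (-(L*m)) := by
    have : Real.exp (-L) ≤ Real.exp (-(L*m)) := by
      apply Real.exp_le_exp.mpr; nlinarith
    have hEL : Real.exp (-L) = 1/4 := by
      rw [Real.exp_neg, hL, Real.exp_log (by norm_num : (0:ℝ) < 4)]; norm_num
    linarith
  nlinarith

open Classical in
/-- In a single iteration of RandColStep, if the uncolored vertices `U`
satisfy the palette invariant `|C_w| ≥ d(w) + 1` (where `d(w)` is the number of
uncolored neighbors of `w`), then a fixed uncolored vertex `u` gets permanently colored
— i.e., no uncolored neighbor tentatively picks `u`'s tentative color — with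
probability at least `1/4` over the independent uniform picks `σ v ∈ C_v`. -/
theorem stmt12 {V : Type} [Fintype V] [DecidableEq V] (G : SimpleGraph V)
    [DecidableRel G.Adj] (Δ : ℕ) (hdeg : ∀ v : V, G.degree v ≤ Δ)
    (U : Finset V) (u : V) (hu : u ∈ U)
    (C : V → Finset (Fin (Δ + 1))) (hCne : ∀ v : V, (C v).Nonempty)
    (hinv : ∀ w ∈ U, ((G.neighborFinset w) ∩ U).card + 1 ≤ (C w).card) :
    (1 / 4 : ℝ) * ((Fintype.piFinset C).card : ℝ) ≤
      (((Fintype.piFinset C).filter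
          (fun σ : V → Fin (Δ + 1) =>
            ∀ v ∈ (G.neighborFinset u) ∩ U, σ v ≠ σ u)).card : ℝ) := by
  classical
  set N := (G.neighborFinset u) ∩ U with hN
  have huN : u ∉ N := by
    simp [hN, SimpleGraph.mem_neighborFinset]
  set D : Fin (Δ+1) → V → Finset (Fin (Δ+1)) :=
    fun c v => if v = u then {c} else if v ∈ N then (C v).erase c else C v with hD
  have hsplit : (Fintype.piFinset C).filter
        (fun σ : V → Fin (Δ + 1) => ∀ v ∈ N, σ v ≠ σ u)
      = (C u).biUnion (fun c => Fintype.piFinset (D c)) := by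
    ext σ
    simp only [Finset.mem_filter, Fintype.mem_piFinset, Finset.mem_biUnion, hD]
    constructor
    · rintro ⟨hσ, hne⟩
      refine ⟨σ u, hσ u, fun v => ?_⟩
      by_cases hvu : v = u
      · subst hvu; simp
      · simp only [hvu, if_false]
        by_cases hvN : v ∈ N
        · simp [hvN, Finset.mem_erase, hne v hvN, hσ v]
        · simp [hvN, hσ v]
    · rintro ⟨c, hc, hσ⟩
      have hσu : σ u = c := by have := hσ u; simpa using this
      constructor
      · intro v
        by_cases hvu : v = u
        · subst hvu; rw [hσu]; exact hc
        · have h := hσ v; simp only [hvu, if_false] at h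
          by_cases hvN : v ∈ N
          · simp only [hvN, if_true, Finset.mem_erase] at h; exact h.2
          · simpa [hvN] using h
      · intro v hvN
        have h := hσ v
        have hvu : v ≠ u := fun he => huN (he ▸ hvN)
        simp only [hvu, if_false, hvN, if_true, Finset.mem_erase] at h
        rw [hσu]; exact h.1
  have hdisj : ∀ c1 ∈ C u, ∀ c2 ∈ C u, c1 ≠ c2 →
      Disjoint (Fintype.piFinset (D c1)) (Fintype.piFinset (D c2)) := by
    intro c1 _ c2 _ hne
    rw [Finset.disjoint_left]
    intro σ h1 h2
    have e1 : σ u = c1 := by have := (Fintype.mem_piFinset.mp h1) u; simpa [hD] using this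
    have e2 : σ u = c2 := by have := (Fintype.mem_piFinset.mp h2) u; simpa [hD] using this
    exact hne (e1 ▸ e2)
  have hcard : ((Fintype.piFinset C).filter
        (fun σ : V → Fin (Δ + 1) => ∀ v ∈ N, σ v ≠ σ u)).card
      = ∑ c ∈ C u, ∏ v, (D c v).card := by
    rw [hsplit, Finset.card_biUnion hdisj]
    exact Finset.sum_congr rfl (fun c _ => Fintype.card_piFinset _)
  set R : Finset V := Finset.univ \ insert u N with hR
  have hprodD : ∀ c, (∏ v, (D c v).card)
      = (∏ v ∈ N, ((C v).erase c).card) * ∏ v ∈ R, (C v).card := by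
    intro c
    rw [← Finset.prod_sdiff (Finset.subset_univ (insert u N)), ← hR,
      Finset.prod_insert huN]
    have h1 : (D c u).card = 1 := by simp [hD]
    have h2 : ∀ v ∈ N, (D c v).card = ((C v).erase c).card := by
      intro v hv
      have hvu : v ≠ u := fun he => huN (he ▸ hv)
      simp [hD, hvu, hv]
    have h3 : ∀ v ∈ R, (D c v).card = (C v).card := by
      intro v hv
      rw [hR, Finset.mem_sdiff, Finset.mem_insert] at hv
      push_neg at hv
      simp [hD, hv.2.1, hv.2.2]
    rw [Finset.prod_congr rfl h2, Finset.prod_congr rfl h3, h1]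
    ring
  have hprodC : (∏ v, (C v).card)
      = ((C u).card * ∏ v ∈ N, (C v).card) * ∏ v ∈ R, (C v).card := by
    rw [← Finset.prod_sdiff (Finset.subset_univ (insert u N)), ← hR,
      Finset.prod_insert huN]
    ring
  -- pass to reals
  rw [hcard, Fintype.card_piFinset, hprodC]
  push_cast [hprodD]
  set T : ℝ := ∏ v ∈ R, ((C v).card : ℝ) with hT
  have hT0 : 0 ≤ T := Finset.prod_nonneg (fun v _ => by positivity)
  rw [← Finset.sum_mul]
  have main : (1/4 : ℝ) * (((C u).card : ℝ) * ∏ v ∈ N, ((C v).card : ℝ))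
      ≤ ∑ c ∈ C u, ∏ v ∈ N, (((C v).erase c).card : ℝ) := by
    set x : V → Fin (Δ+1) → ℝ :=
      fun v c => if c ∈ C v then (1:ℝ)/((C v).card : ℝ) else 0 with hx
    have hcv2 : ∀ v ∈ N, (2:ℝ) ≤ ((C v).card : ℝ) := by
      intro v hv
      rw [hN, Finset.mem_inter, SimpleGraph.mem_neighborFinset] at hv
      have huv : u ∈ (G.neighborFinset v) ∩ U := by
        rw [Finset.mem_inter, SimpleGraph.mem_neighborFinset]
        exact ⟨hv.1.symm, hu⟩
      have h1 : 1 ≤ ((G.neighborFinset v) ∩ U).card := Finset.card_pos.mpr ⟨u, huv⟩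
      have h3 := hinv v hv.2
      have h4 : 2 ≤ (C v).card := le_trans (Nat.add_le_add_right h1 1) h3
      exact_mod_cast h4
    have herase : ∀ v ∈ N, ∀ c, (((C v).erase c).card : ℝ)
        = ((C v).card : ℝ) * (1 - x v c) := by
      intro v hv c
      have h2 := hcv2 v hv
      rw [Finset.card_erase_eq_ite, hx]
      by_cases hc : c ∈ C v
      · have h1 : 1 ≤ (C v).card := Finset.card_pos.mpr (hCne v)
        simp only [hc, if_true]
        rw [Nat.cast_sub h1]
        field_simp
        norm_num
      · simp [hc]
    have hstep : ∀ c ∈ C u, ∏ v ∈ N, (((C v).erase c).card : ℝ)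
        = (∏ v ∈ N, ((C v).card : ℝ)) * ∏ v ∈ N, (1 - x v c) := by
      intro c _
      rw [← Finset.prod_mul_distrib]
      exact Finset.prod_congr rfl (fun v hv => herase v hv c)
    rw [Finset.sum_congr rfl hstep, ← Finset.mul_sum]
    have hx0 : ∀ v ∈ N, ∀ c ∈ C u, 0 ≤ x v c := by
      intro v hv c _
      rw [hx]; dsimp only
      split
      · positivity
      · exact le_rfl
    have hx2 : ∀ v ∈ N, ∀ c ∈ C u, x v c ≤ 1/2 := by
      intro v hv c _
      rw [hx]; dsimp only
      split
      · rw [div_le_div_iff₀ (by linarith [hcv2 v hv]) (by norm_num)]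
        linarith [hcv2 v hv]
      · norm_num
    have hsum : ∑ c ∈ C u, ∑ v ∈ N, x v c ≤ ((C u).card : ℝ) - 1 := by
      rw [Finset.sum_comm]
      have hone : ∀ v ∈ N, ∑ c ∈ C u, x v c ≤ 1 := by
        intro v hv
        have h2 := hcv2 v hv
        have : ∑ c ∈ C u, x v c
            = ((C u).filter (· ∈ C v)).card * (1/((C v).card : ℝ)) := by
          rw [hx, Finset.sum_ite, Finset.sum_const_zero, add_zero,
            Finset.sum_const, nsmul_eq_mul]
        rw [this]
        have hsub : (C u).filter (· ∈ C v) ⊆ C v := fun c hc =>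
          (Finset.mem_filter.mp hc).2
        have hle : (((C u).filter (· ∈ C v)).card : ℝ) ≤ ((C v).card : ℝ) := by
          exact_mod_cast Finset.card_le_card hsub
        rw [mul_one_div, div_le_one (by linarith)]
        exact hle
      calc ∑ v ∈ N, ∑ c ∈ C u, x v c ≤ ∑ v ∈ N, (1:ℝ) := Finset.sum_le_sum hone
        _ = N.card := by simp
        _ ≤ ((C u).card : ℝ) - 1 := by
            have h5 := hinv u hu
            rw [← hN] at h5
            have h6 : (N.card : ℝ) + 1 ≤ ((C u).card : ℝ) := by exact_mod_cast h5
            linarith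
    have hkey := key' (C u) N x hx0 hx2 hsum (hCne u)
    have hPnn : (0:ℝ) ≤ ∏ v ∈ N, ((C v).card : ℝ) :=
      Finset.prod_nonneg (fun v _ => Nat.cast_nonneg _)
    have hmul := mul_le_mul_of_nonneg_left hkey hPnn
    refine le_trans (le_of_eq (by ring)) hmul
  have hfin := mul_le_mul_of_nonneg_right main hT0
  refine le_trans (le_of_eq (by ring)) hfin
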